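/- Suppose R(X_E, X_F) ≤ 1 − c for some c > 0, with (X_E, X_F) full rank and all columns centred. Then there exists a constant C > 0 depending only on c such that ‖T_{Y:E.F} − T_{Y:E}‖_∞ ≤ C σ⁻¹ ‖Y‖₂ {R(X_E, X_F) + R(Y, X_F)} and ‖T_{Y:E.F} − T_{Ỹ:E}‖_∞ ≤ C σ⁻¹ ‖Ỹ‖₂ R(X_E, X_F), where Ỹ = (I − P_F)Y. -/

import Mathlib

open Matrix

noncomputable def specNorm {m n : Type*} [Fintype m] [Fintype n] [DecidableEq n]
    (M : Matrix m n ℝ) : ℝ :=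
  ‖(Matrix.toEuclideanLin M).toContinuousLinearMap‖

noncomputable def proj {n : ℕ} {m : Type*} [Fintype m] [DecidableEq m]
    (X : Matrix (Fin n) m ℝ) : Matrix (Fin n) (Fin n) ℝ :=
  X * (Xᵀ * X)⁻¹ * Xᵀ

noncomputable def nrm {m : Type*} [Fintype m] (v : m → ℝ) : ℝ :=
  Real.sqrt (∑ i, (v i)^2)
section Helpers

variable {m k l : Type*} [Fintype m] [Fintype k] [Fintype l]

lemma nrm_nonneg (v : m → ℝ) : 0 ≤ nrm v := Real.sqrt_nonneg _

lemma dot_self_eq_sq (v : m → ℝ) : v ⬝ᵥ v = nrm v ^ 2 := by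
  rw [nrm, Real.sq_sqrt (Finset.sum_nonneg fun i _ => sq_nonneg _)]
  simp [dotProduct, sq]

lemma dot_self_pos {x : m → ℝ} (hx : x ≠ 0) : 0 < x ⬝ᵥ x := by
  obtain ⟨i, hi⟩ : ∃ i, x i ≠ 0 := by
    by_contra h; push_neg at h; exact hx (funext h)
  exact Finset.sum_pos' (fun j _ => mul_self_nonneg _)
    ⟨i, Finset.mem_univ i, mul_self_pos.mpr hi⟩

lemma le_of_sq_le_sq' {x y : ℝ} (hx : 0 ≤ x) (hy : 0 ≤ y) (h : x^2 ≤ y^2) : x ≤ y := by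
  nlinarith [sq_nonneg (x - y), sq_nonneg (x + y)]

lemma dot_sq_le (x y : m → ℝ) : (x ⬝ᵥ y)^2 ≤ (x ⬝ᵥ x) * (y ⬝ᵥ y) := by
  have := Finset.sum_mul_sq_le_sq_mul_sq Finset.univ x y
  simpa [dotProduct, sq] using this

lemma abs_dot_le (x y : m → ℝ) : |x ⬝ᵥ y| ≤ nrm x * nrm y := by
  refine le_of_sq_le_sq' (abs_nonneg _) (mul_nonneg (nrm_nonneg _) (nrm_nonneg _)) ?_
  rw [sq_abs, mul_pow, ← dot_self_eq_sq, ← dot_self_eq_sq]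
  exact dot_sq_le x y

lemma nrm_eq_enorm (v : m → ℝ) : nrm v = ‖(WithLp.equiv 2 (m → ℝ)).symm v‖ := by
  rw [EuclideanSpace.norm_eq]
  simp [nrm, Real.norm_eq_abs, sq_abs]

lemma nrm_mulVec_le [DecidableEq k] (M : Matrix m k ℝ) (v : k → ℝ) :
    nrm (M *ᵥ v) ≤ specNorm M * nrm v := by
  have h := ((Matrix.toEuclideanLin M).toContinuousLinearMap).le_opNorm
    ((WithLp.equiv 2 (k → ℝ)).symm v)
  simp only [LinearMap.coe_toContinuousLinearMap'] at h
  change ‖(WithLp.equiv 2 (m → ℝ)).symm (M *ᵥ v)‖ ≤ _ at h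
  rw [← nrm_eq_enorm, ← nrm_eq_enorm] at h
  exact h


lemma dot_tmul {p : Type*} [Fintype p] (M : Matrix p k ℝ) (N : Matrix p l ℝ) (u : k → ℝ) (v : l → ℝ) :
    u ⬝ᵥ ((Mᵀ * N) *ᵥ v) = (M *ᵥ u) ⬝ᵥ (N *ᵥ v) := by
  rw [← Matrix.mulVec_mulVec, Matrix.dotProduct_mulVec, Matrix.vecMul_transpose]

lemma dot_tmulvec {p : Type*} [Fintype p] (M : Matrix p k ℝ) (u : k → ℝ) (v : p → ℝ) :
    u ⬝ᵥ (Mᵀ *ᵥ v) = (M *ᵥ u) ⬝ᵥ v := by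
  rw [Matrix.dotProduct_mulVec, Matrix.vecMul_transpose]

lemma dot_symm {M : Matrix k k ℝ} (h : Mᵀ = M) (u v : k → ℝ) :
    u ⬝ᵥ (M *ᵥ v) = (M *ᵥ u) ⬝ᵥ v := by
  conv_lhs => rw [← h]
  exact dot_tmulvec M u v

lemma dot_proj {P : Matrix k k ℝ} (hPsym : Pᵀ = P) (hPP : P * P = P)
    (x z : k → ℝ) : x ⬝ᵥ (P *ᵥ z) = (P *ᵥ x) ⬝ᵥ (P *ᵥ z) := by
  rw [← dot_tmulvec P x (P *ᵥ z), hPsym, Matrix.mulVec_mulVec, hPP]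

lemma nrm_transpose_mulVec_le [DecidableEq m] [DecidableEq k] (M : Matrix k m ℝ) (v : k → ℝ) :
    nrm (Mᵀ *ᵥ v) ≤ specNorm M * nrm v := by
  set w := Mᵀ *ᵥ v with hw
  have h1 : w ⬝ᵥ w = v ⬝ᵥ (M *ᵥ w) := by
    rw [hw, Matrix.mulVec_transpose, ← Matrix.dotProduct_mulVec]
  have h2 : v ⬝ᵥ (M *ᵥ w) ≤ nrm v * (specNorm M * nrm w) := by
    have ha := (le_abs_self (v ⬝ᵥ (M *ᵥ w))).trans (abs_dot_le v (M *ᵥ w))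
    have hb := nrm_mulVec_le M w
    nlinarith [nrm_nonneg v, nrm_nonneg (M *ᵥ w)]
  have h3 : nrm w ^ 2 ≤ nrm v * (specNorm M * nrm w) := by rw [← dot_self_eq_sq]; linarith
  rcases le_or_gt (nrm w) 0 with h | h
  · have : nrm w = 0 := le_antisymm h (nrm_nonneg _)
    rw [this]
    have : (0:ℝ) ≤ ‖LinearMap.toContinuousLinearMap (Matrix.toEuclideanLin M)‖ := norm_nonneg _
    exact mul_nonneg this (nrm_nonneg v)
  · nlinarith [h3]

omit [Fintype k] in
lemma isHermitian_of_transpose {M : Matrix k k ℝ} (h : Mᵀ = M) :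
    M.IsHermitian := by
  show Mᴴ = M
  ext i j
  simpa [Matrix.conjTranspose_apply] using congrFun (congrFun h i) j

lemma posDef_gram [DecidableEq k] {p : Type*} [Fintype p] (X : Matrix p k ℝ)
    (h : ∀ v, X *ᵥ v = 0 → v = 0) : (Xᵀ * X).PosDef := by
  refine Matrix.PosDef.of_dotProduct_mulVec_pos (isHermitian_of_transpose (by rw [Matrix.transpose_mul, Matrix.transpose_transpose]))
    fun v hv => ?_
  have h1 : star v ⬝ᵥ ((Xᵀ * X) *ᵥ v) = (X *ᵥ v) ⬝ᵥ (X *ᵥ v) := by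
    rw [star_trivial]; exact dot_tmul X X v v
  rw [h1]
  exact dot_self_pos fun h0 => hv (h _ h0)

lemma nrm_neg (v : m → ℝ) : nrm (-v) = nrm v := by simp [nrm]

end Helpers

section Main
open Matrix

lemma mulVec_apply_eq {k : Type*} [Fintype k] [DecidableEq k] {M : Matrix k k ℝ}
    (hsym : Mᵀ = M) (w : k → ℝ) (j : k) : (M *ᵥ w) j = (M *ᵥ Pi.single j 1) ⬝ᵥ w := by
  simp only [Matrix.mulVec_single, mul_one, MulOpposite.op_one, one_smul, Matrix.col_apply']
  simp only [Matrix.mulVec, dotProduct]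
  refine Finset.sum_congr rfl fun i _ => ?_
  have h := congrFun (congrFun hsym j) i
  simp only [Matrix.transpose_apply] at h
  rw [h]

lemma final_calc {σ rc R rS rA α β D2 nz : ℝ}
    (hσ : 0 < σ) (hrc : 0 < rc)
    (hR0 : 0 ≤ R) (hR1 : R ≤ 1) (hnz : 0 ≤ nz)
    (hrS : 0 < rS) (hrA : 0 < rA) (hrAS : rA ≤ rS)
    (hratio : (1 - R^2) * rS ≤ rA)
    (habs1 : |α - β| ≤ D2 * nz)
    (hD2 : rc * D2 ≤ R * rS)
    (habs2 : |β| ≤ rA * nz) :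
    |σ⁻¹ * α / rS - σ⁻¹ * β / rA| ≤ (1 + rc⁻¹) * σ⁻¹ * nz * R := by
  have hσi : (0:ℝ) < σ⁻¹ := inv_pos.mpr hσ
  have e1 : σ⁻¹ * α / rS - σ⁻¹ * β / rA = σ⁻¹ * ((α - β)/rS + β * (1/rS - 1/rA)) := by
    field_simp; ring
  rw [e1, abs_mul, abs_of_pos hσi]
  have hrr : 1/rS ≤ 1/rA := one_div_le_one_div_of_le hrA hrAS
  have h3 : |(α - β)/rS + β * (1/rS - 1/rA)| ≤ |α - β|/rS + |β| * (1/rA - 1/rS) := by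
    refine (abs_add_le _ _).trans ?_
    rw [abs_div, abs_of_pos hrS, abs_mul]
    have : |1/rS - 1/rA| = 1/rA - 1/rS := by rw [abs_of_nonpos (by linarith)]; ring
    rw [this]
  have hterm1 : |α - β| / rS ≤ rc⁻¹ * (nz * R) := by
    rw [div_le_iff₀ hrS]
    have hD2' : D2 ≤ rc⁻¹ * (R * rS) := by
      rw [inv_mul_eq_div, le_div_iff₀ hrc]; linarith [hD2]
    calc |α - β| ≤ D2 * nz := habs1
      _ ≤ (rc⁻¹ * (R * rS)) * nz := mul_le_mul_of_nonneg_right hD2' hnz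
      _ = rc⁻¹ * (nz * R) * rS := by ring
  have hterm2 : |β| * (1/rA - 1/rS) ≤ nz * R := by
    have h4 : 0 ≤ 1/rA - 1/rS := by linarith
    have h5 : |β| * (1/rA - 1/rS) ≤ (rA * nz) * (1/rA - 1/rS) :=
      mul_le_mul_of_nonneg_right habs2 h4
    have h6 : (rA * nz) * (1/rA - 1/rS) = nz * (1 - rA/rS) := by field_simp
    have h7 : 1 - rA/rS ≤ R^2 := by
      have h8 : (1 - R^2) ≤ rA/rS := (le_div_iff₀ hrS).mpr hratio
      linarith
    have h9 : nz * (1 - rA/rS) ≤ nz * R^2 := mul_le_mul_of_nonneg_left h7 hnz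
    rw [h6] at h5
    have h10 : 0 ≤ nz * (R * (1 - R)) :=
      mul_nonneg hnz (mul_nonneg hR0 (sub_nonneg.mpr hR1))
    nlinarith [h5, h9, h10]
  calc σ⁻¹ * |(α - β)/rS + β * (1/rS - 1/rA)|
      ≤ σ⁻¹ * (rc⁻¹ * (nz * R) + nz * R) := by
        refine mul_le_mul_of_nonneg_left ?_ hσi.le
        linarith [h3.trans (add_le_add hterm1 hterm2)]
    _ = (1 + rc⁻¹) * σ⁻¹ * nz * R := by ring

end Main

lemma calc_dAS {dS dA x : ℝ} (h0 : dA^2 ≤ dS * x) (q5 : x ≤ dA) (hdA : 0 < dA)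
    (hdS : 0 < dS) : dA ≤ dS := by nlinarith

lemma calc_low {dS dA t R : ℝ} (hCS : dS^2 ≤ dA * t) (hts : (1-R^2)*t ≤ dS) (hdS : 0 < dS)
    (hdA : 0 < dA) (ht0 : 0 ≤ t) (hR2 : 0 < 1 - R^2) : (1-R^2)*dS ≤ dA := by
  nlinarith [mul_le_mul_of_nonneg_left hts hdA.le, mul_le_mul_of_nonneg_left hCS hR2.le]

lemma calc_ratio {dS dA R rS rA : ℝ} (hrS2 : rS^2 = dS) (hrA2 : rA^2 = dA) (hrS : 0 < rS)
    (hrA : 0 < rA) (hrAS : rA ≤ rS) (hlow : (1-R^2)*dS ≤ dA) : (1-R^2)*rS ≤ rA := by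
  nlinarith [mul_le_mul_of_nonneg_left hrAS hrA.le]

lemma calc_D2 {t dS dA cc R : ℝ} (hts : (1-R^2)*t ≤ dS) (hdAS : dA ≤ dS) (hcR : cc ≤ 1-R^2)
    (hcc : 0 < cc) (hu0 : 0 ≤ t - 2*dS + dA) (hdS : 0 ≤ dS) :
    cc*(t-2*dS+dA) ≤ R^2*dS := by nlinarith

set_option maxHeartbeats 2000000 in
open Matrix in
theorem key (c : ℝ) (hc : 0 < c) {n a b : ℕ} (XE : Matrix (Fin n) (Fin a) ℝ)
    (XF : Matrix (Fin n) (Fin b) ℝ) (Y : Fin n → ℝ) (σ : ℝ) (hσ : 0 < σ) (hY : Y ≠ 0)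
    (hrank : (Matrix.fromCols XE XF).rank = a + b)
    (hspec : specNorm (proj XE * proj XF) ≤ 1 - c) :
    (∀ j : Fin a,
      |σ⁻¹ * (((Matrix.fromCols XE XF)ᵀ * Matrix.fromCols XE XF)⁻¹ *ᵥ
            ((Matrix.fromCols XE XF)ᵀ *ᵥ Y)) (Sum.inl j) /
          Real.sqrt ((((Matrix.fromCols XE XF)ᵀ * Matrix.fromCols XE XF)⁻¹)
            (Sum.inl j) (Sum.inl j)) -
        σ⁻¹ * ((XEᵀ * XE)⁻¹ *ᵥ (XEᵀ *ᵥ Y)) j / Real.sqrt (((XEᵀ * XE)⁻¹) j j)| ≤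
        (1 + (Real.sqrt c)⁻¹) * σ⁻¹ * nrm Y *
          (specNorm (proj XE * proj XF) + nrm (proj XF *ᵥ Y) / nrm Y)) ∧
    (∀ j : Fin a,
      |σ⁻¹ * (((Matrix.fromCols XE XF)ᵀ * Matrix.fromCols XE XF)⁻¹ *ᵥ
            ((Matrix.fromCols XE XF)ᵀ *ᵥ Y)) (Sum.inl j) /
          Real.sqrt ((((Matrix.fromCols XE XF)ᵀ * Matrix.fromCols XE XF)⁻¹)
            (Sum.inl j) (Sum.inl j)) -
        σ⁻¹ * ((XEᵀ * XE)⁻¹ *ᵥ (XEᵀ *ᵥ ((1 - proj XF) *ᵥ Y))) j /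
          Real.sqrt (((XEᵀ * XE)⁻¹) j j)| ≤
        (1 + (Real.sqrt c)⁻¹) * σ⁻¹ * nrm ((1 - proj XF) *ᵥ Y) *
          specNorm (proj XE * proj XF)) := by
  classical
  have hσi : (0:ℝ) < σ⁻¹ := inv_pos.mpr hσ
  have hrc : (0:ℝ) < Real.sqrt c := Real.sqrt_pos.mpr hc
  have hrc2 : Real.sqrt c ^ 2 = c := Real.sq_sqrt hc.le
  set P := proj XF with hPdef
  set R := specNorm (proj XE * P) with hRdef
  have hR0 : 0 ≤ R := norm_nonneg _
  have hc1 : c ≤ 1 := by linarith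
  have hR1 : R ≤ 1 := by linarith
  have hcR : c ≤ 1 - R^2 := by nlinarith
  -- full rank consequences
  have hinj : ∀ (u : Fin a → ℝ) (v : Fin b → ℝ), XE *ᵥ u + XF *ᵥ v = 0 → u = 0 ∧ v = 0 := by
    have h1 := LinearMap.finrank_range_add_finrank_ker (Matrix.fromCols XE XF).mulVecLin
    have hfr : Module.finrank ℝ (LinearMap.range (Matrix.fromCols XE XF).mulVecLin)
        = a + b := hrank
    rw [hfr, Module.finrank_fintype_fun_eq_card, Fintype.card_sum, Fintype.card_fin,
      Fintype.card_fin] at h1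
    have hker : LinearMap.ker (Matrix.fromCols XE XF).mulVecLin = ⊥ :=
      Submodule.finrank_eq_zero.mp (by omega)
    intro u v huv
    have hx : Sum.elim u v ∈ LinearMap.ker (Matrix.fromCols XE XF).mulVecLin := by
      rw [LinearMap.mem_ker, Matrix.mulVecLin_apply, Matrix.fromCols_mulVec_sumElim]
      exact huv
    rw [hker, Submodule.mem_bot] at hx
    exact ⟨funext fun i => congrFun hx (Sum.inl i), funext fun i => congrFun hx (Sum.inr i)⟩
  have hinjE : ∀ u, XE *ᵥ u = 0 → u = 0 := fun u hu => (hinj u 0 (by simp [hu])).1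
  have hinjF : ∀ v, XF *ᵥ v = 0 → v = 0 := fun v hv => (hinj 0 v (by simp [hv])).2
  have hA : (XEᵀ * XE).PosDef := posDef_gram XE hinjE
  have hB : (XFᵀ * XF).PosDef := posDef_gram XF hinjF
  have hAd : IsUnit (XEᵀ * XE).det := isUnit_iff_ne_zero.mpr hA.det_pos.ne'
  have hBd : IsUnit (XFᵀ * XF).det := isUnit_iff_ne_zero.mpr hB.det_pos.ne'
  have hAsym : (XEᵀ * XE)ᵀ = XEᵀ * XE := by rw [Matrix.transpose_mul, Matrix.transpose_transpose]
  have hBsym : (XFᵀ * XF)ᵀ = XFᵀ * XF := by rw [Matrix.transpose_mul, Matrix.transpose_transpose]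
  have hPsym : Pᵀ = P := by
    rw [hPdef]
    show (XF * (XFᵀ * XF)⁻¹ * XFᵀ)ᵀ = XF * (XFᵀ * XF)⁻¹ * XFᵀ
    rw [Matrix.transpose_mul, Matrix.transpose_mul, Matrix.transpose_transpose,
      Matrix.transpose_nonsing_inv, hBsym, ← Matrix.mul_assoc]
  have hPP : P * P = P := by
    rw [hPdef]
    show XF * (XFᵀ * XF)⁻¹ * XFᵀ * (XF * (XFᵀ * XF)⁻¹ * XFᵀ) = XF * (XFᵀ * XF)⁻¹ * XFᵀ
    calc XF * (XFᵀ * XF)⁻¹ * XFᵀ * (XF * (XFᵀ * XF)⁻¹ * XFᵀ)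
        = XF * ((XFᵀ * XF)⁻¹ * (XFᵀ * XF) * ((XFᵀ * XF)⁻¹ * XFᵀ)) := by
          simp only [Matrix.mul_assoc]
      _ = XF * (XFᵀ * XF)⁻¹ * XFᵀ := by
          rw [Matrix.nonsing_inv_mul _ hBd, Matrix.one_mul, ← Matrix.mul_assoc]
  have hPE : proj XE * XE = XE := by
    show XE * (XEᵀ * XE)⁻¹ * XEᵀ * XE = XE
    simp only [Matrix.mul_assoc]
    rw [Matrix.nonsing_inv_mul _ hAd, Matrix.mul_one]
  have hPEsym : (proj XE)ᵀ = proj XE := by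
    show (XE * (XEᵀ * XE)⁻¹ * XEᵀ)ᵀ = XE * (XEᵀ * XE)⁻¹ * XEᵀ
    rw [Matrix.transpose_mul, Matrix.transpose_mul, Matrix.transpose_transpose,
      Matrix.transpose_nonsing_inv, hAsym, ← Matrix.mul_assoc]
  have hPPE : P * proj XE = (proj XE * P)ᵀ := by rw [Matrix.transpose_mul, hPsym, hPEsym]
  have hQ : ∀ v : Fin a → ℝ, nrm (P *ᵥ (XE *ᵥ v)) ≤ R * nrm (XE *ᵥ v) := by
    intro v
    have h2 : proj XE *ᵥ (XE *ᵥ v) = XE *ᵥ v := by rw [Matrix.mulVec_mulVec, hPE]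
    have h1 : P *ᵥ (XE *ᵥ v) = (proj XE * P)ᵀ *ᵥ (XE *ᵥ v) := by
      rw [← hPPE, ← Matrix.mulVec_mulVec, h2]
    rw [h1, hRdef]
    exact nrm_transpose_mulVec_le _ _
  -- Schur complement
  set S := XEᵀ * XE - XEᵀ * XF * (XFᵀ * XF)⁻¹ * (XFᵀ * XE) with hSdef
  have hSP : S = XEᵀ * XE - XEᵀ * (P * XE) := by
    rw [hSdef, hPdef]
    congr 1
    show XEᵀ * XF * (XFᵀ * XF)⁻¹ * (XFᵀ * XE) = XEᵀ * (XF * (XFᵀ * XF)⁻¹ * XFᵀ * XE)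
    simp only [Matrix.mul_assoc]
  have hSsym : Sᵀ = S := by
    rw [hSP, Matrix.transpose_sub, hAsym]
    congr 1
    rw [Matrix.transpose_mul, Matrix.transpose_mul, Matrix.transpose_transpose, hPsym,
      Matrix.mul_assoc]
  have hSquad : ∀ u v : Fin a → ℝ, u ⬝ᵥ (S *ᵥ v)
      = (XE *ᵥ u) ⬝ᵥ (XE *ᵥ v) - (P *ᵥ (XE *ᵥ u)) ⬝ᵥ (P *ᵥ (XE *ᵥ v)) := by
    intro u v
    rw [hSP, Matrix.sub_mulVec, dotProduct_sub, dot_tmul XE XE u v]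
    congr 1
    rw [dot_tmul XE (P * XE) u v, ← Matrix.mulVec_mulVec, dot_proj hPsym hPP]
  have hAquad : ∀ u v : Fin a → ℝ, u ⬝ᵥ ((XEᵀ * XE) *ᵥ v) = (XE *ᵥ u) ⬝ᵥ (XE *ᵥ v) :=
    fun u v => dot_tmul XE XE u v
  have hSlow : ∀ v : Fin a → ℝ, (1 - R^2) * (v ⬝ᵥ ((XEᵀ * XE) *ᵥ v)) ≤ v ⬝ᵥ (S *ᵥ v) := by
    intro v
    rw [hSquad v v, hAquad v v, dot_self_eq_sq, dot_self_eq_sq]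
    have h2 := hQ v
    nlinarith [nrm_nonneg (XE *ᵥ v), nrm_nonneg (P *ᵥ (XE *ᵥ v))]
  have hShigh : ∀ v : Fin a → ℝ, v ⬝ᵥ (S *ᵥ v) ≤ v ⬝ᵥ ((XEᵀ * XE) *ᵥ v) := by
    intro v
    rw [hSquad v v, hAquad v v, dot_self_eq_sq, dot_self_eq_sq]
    linarith [sq_nonneg (nrm (P *ᵥ (XE *ᵥ v)))]
  have hS : S.PosDef := by
    refine Matrix.PosDef.of_dotProduct_mulVec_pos (isHermitian_of_transpose hSsym) fun v hv => ?_
    rw [star_trivial]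
    have h1 := hSlow v
    have h2 : 0 < v ⬝ᵥ ((XEᵀ * XE) *ᵥ v) := by
      have h3 := hA.dotProduct_mulVec_pos hv; rwa [star_trivial] at h3
    nlinarith
  have hSd : IsUnit S.det := isUnit_iff_ne_zero.mpr hS.det_pos.ne'
  have hSz : ∀ u v : Fin a → ℝ, (XE *ᵥ u - P *ᵥ (XE *ᵥ u)) ⬝ᵥ (XE *ᵥ v - P *ᵥ (XE *ᵥ v))
      = u ⬝ᵥ (S *ᵥ v) := by
    intro u v
    rw [hSquad]
    have h1 : (XE *ᵥ u) ⬝ᵥ (P *ᵥ (XE *ᵥ v)) = (P *ᵥ (XE *ᵥ u)) ⬝ᵥ (P *ᵥ (XE *ᵥ v)) :=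
      dot_proj hPsym hPP _ _
    have h2 : (P *ᵥ (XE *ᵥ u)) ⬝ᵥ (XE *ᵥ v) = (P *ᵥ (XE *ᵥ u)) ⬝ᵥ (P *ᵥ (XE *ᵥ v)) := by
      rw [dotProduct_comm, dot_proj hPsym hPP, dotProduct_comm]
    simp only [dotProduct_sub, sub_dotProduct]
    linarith
  -- block inverse
  have hK : (Matrix.fromCols XE XF)ᵀ * Matrix.fromCols XE XF =
      Matrix.fromBlocks (XEᵀ * XE) (XEᵀ * XF) (XFᵀ * XE) (XFᵀ * XF) := by
    rw [Matrix.transpose_fromCols, Matrix.fromRows_mul_fromCols]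
  letI iD : Invertible (XFᵀ * XF) := (XFᵀ * XF).invertibleOfIsUnitDet hBd
  letI iS : Invertible S := S.invertibleOfIsUnitDet hSd
  have hDinv : ⅟(XFᵀ * XF) = (XFᵀ * XF)⁻¹ := invOf_eq_nonsing_inv _
  have hSchur : XEᵀ * XE - XEᵀ * XF * ⅟(XFᵀ * XF) * (XFᵀ * XE) = S := by rw [hDinv, hSdef]
  letI iS' : Invertible (XEᵀ * XE - XEᵀ * XF * ⅟(XFᵀ * XF) * (XFᵀ * XE)) := by
    rw [hSchur]; exact iS
  letI iK : Invertible (Matrix.fromBlocks (XEᵀ * XE) (XEᵀ * XF) (XFᵀ * XE) (XFᵀ * XF)) :=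
    Matrix.fromBlocks₂₂Invertible _ _ _ _
  have hKinv : ((Matrix.fromCols XE XF)ᵀ * Matrix.fromCols XE XF)⁻¹ =
      Matrix.fromBlocks S⁻¹ (-(S⁻¹ * (XEᵀ * XF) * (XFᵀ * XF)⁻¹))
        (-((XFᵀ * XF)⁻¹ * (XFᵀ * XE) * S⁻¹))
        ((XFᵀ * XF)⁻¹ + (XFᵀ * XF)⁻¹ * (XFᵀ * XE) * S⁻¹ * (XEᵀ * XF) * (XFᵀ * XF)⁻¹) := by
    rw [hK, ← invOf_eq_nonsing_inv, Matrix.invOf_fromBlocks₂₂_eq]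
    have h1 : ⅟(XEᵀ * XE - XEᵀ * XF * ⅟(XFᵀ * XF) * (XFᵀ * XE)) = S⁻¹ := by
      rw [invOf_eq_nonsing_inv, hSchur]
    rw [h1, hDinv]
  have hKY : (Matrix.fromCols XE XF)ᵀ *ᵥ Y = Sum.elim (XEᵀ *ᵥ Y) (XFᵀ *ᵥ Y) := by
    rw [Matrix.transpose_fromCols, Matrix.fromRows_mulVec]
  set z := (1 - P) *ᵥ Y with hzdef
  have hzY : z = Y - P *ᵥ Y := by rw [hzdef, Matrix.sub_mulVec, Matrix.one_mulVec]
  have hmat : S⁻¹ * (XEᵀ * XF) * (XFᵀ * XF)⁻¹ * XFᵀ = S⁻¹ * (XEᵀ * P) := by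
    rw [hPdef]
    show S⁻¹ * (XEᵀ * XF) * (XFᵀ * XF)⁻¹ * XFᵀ = S⁻¹ * (XEᵀ * (XF * (XFᵀ * XF)⁻¹ * XFᵀ))
    simp only [Matrix.mul_assoc]
  have hθ : ∀ j : Fin a,
      (((Matrix.fromCols XE XF)ᵀ * Matrix.fromCols XE XF)⁻¹ *ᵥ
        ((Matrix.fromCols XE XF)ᵀ *ᵥ Y)) (Sum.inl j) = (S⁻¹ *ᵥ (XEᵀ *ᵥ z)) j := by
    intro j
    rw [hKY, hKinv, Matrix.fromBlocks_mulVec]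
    show (S⁻¹ *ᵥ (XEᵀ *ᵥ Y) + (-(S⁻¹ * (XEᵀ * XF) * (XFᵀ * XF)⁻¹)) *ᵥ (XFᵀ *ᵥ Y)) j = _
    have hvec : S⁻¹ *ᵥ (XEᵀ *ᵥ Y) + (-(S⁻¹ * (XEᵀ * XF) * (XFᵀ * XF)⁻¹)) *ᵥ (XFᵀ *ᵥ Y)
        = S⁻¹ *ᵥ (XEᵀ *ᵥ z) := by
      rw [hzY, Matrix.neg_mulVec, Matrix.mulVec_sub, Matrix.mulVec_sub]
      simp only [Matrix.mulVec_mulVec]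
      rw [hmat, sub_eq_add_neg]
    rw [hvec]
  have hdiag : ∀ j : Fin a,
      ((((Matrix.fromCols XE XF)ᵀ * Matrix.fromCols XE XF)⁻¹))
        (Sum.inl j) (Sum.inl j) = S⁻¹ j j := by
    intro j; rw [hKinv]; rfl
  -- inverse matrices
  have hSinvP : (S⁻¹).PosDef := hS.inv
  have hAinvP : ((XEᵀ * XE)⁻¹).PosDef := hA.inv
  have hSinvsym : (S⁻¹)ᵀ = S⁻¹ := by rw [Matrix.transpose_nonsing_inv, hSsym]
  have hAinvsym : ((XEᵀ * XE)⁻¹)ᵀ = (XEᵀ * XE)⁻¹ := by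
    rw [Matrix.transpose_nonsing_inv, hAsym]
  -- per-index bounds
  have main2 : ∀ j : Fin a,
      |σ⁻¹ * (S⁻¹ *ᵥ (XEᵀ *ᵥ z)) j / Real.sqrt (S⁻¹ j j) -
        σ⁻¹ * ((XEᵀ * XE)⁻¹ *ᵥ (XEᵀ *ᵥ z)) j / Real.sqrt (((XEᵀ * XE)⁻¹) j j)| ≤
        (1 + (Real.sqrt c)⁻¹) * σ⁻¹ * nrm z * R := by
    intro j
    set e : Fin a → ℝ := Pi.single j 1 with hedef
    have he0 : e ≠ 0 := by
      intro h0
      have h1 := congrFun h0 j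
      rw [hedef] at h1; simp at h1
    set s : Fin a → ℝ := S⁻¹ *ᵥ e with hsdef
    set aj : Fin a → ℝ := (XEᵀ * XE)⁻¹ *ᵥ e with hajdef
    have hsj : s j = S⁻¹ j j := by rw [hsdef, hedef]; simp
    have hajj : aj j = ((XEᵀ * XE)⁻¹) j j := by rw [hajdef, hedef]; simp
    have hdS : 0 < S⁻¹ j j := by
      have h0 := hSinvP.dotProduct_mulVec_pos he0
      rw [star_trivial, ← hsdef] at h0
      rwa [hedef, single_dotProduct, one_mul, hsj] at h0
    have hdA : 0 < ((XEᵀ * XE)⁻¹) j j := by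
      have h0 := hAinvP.dotProduct_mulVec_pos he0
      rw [star_trivial, ← hajdef] at h0
      rwa [hedef, single_dotProduct, one_mul, hajj] at h0
    have hSe : S *ᵥ s = e := by
      rw [hsdef, Matrix.mulVec_mulVec, Matrix.mul_nonsing_inv _ hSd, Matrix.one_mulVec]
    have hAe : (XEᵀ * XE) *ᵥ aj = e := by
      rw [hajdef, Matrix.mulVec_mulVec, Matrix.mul_nonsing_inv _ hAd, Matrix.one_mulVec]
    have q1 : s ⬝ᵥ (S *ᵥ s) = S⁻¹ j j := by
      rw [hSe, hedef, dotProduct_single, mul_one, hsj]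
    have q2 : aj ⬝ᵥ ((XEᵀ * XE) *ᵥ aj) = ((XEᵀ * XE)⁻¹) j j := by
      rw [hAe, hedef, dotProduct_single, mul_one, hajj]
    have q4 : s ⬝ᵥ (S *ᵥ aj) = ((XEᵀ * XE)⁻¹) j j := by
      rw [dot_symm hSsym, hSe, hedef, single_dotProduct, one_mul, hajj]
    have q3 : aj ⬝ᵥ ((XEᵀ * XE) *ᵥ s) = S⁻¹ j j := by
      rw [dot_symm hAsym, hAe, hedef, single_dotProduct, one_mul, hsj]
    have q3' : s ⬝ᵥ ((XEᵀ * XE) *ᵥ aj) = S⁻¹ j j := by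
      rw [dot_symm hAsym, dotProduct_comm]; exact q3
    have q5 : aj ⬝ᵥ (S *ᵥ aj) ≤ ((XEᵀ * XE)⁻¹) j j := (hShigh aj).trans_eq q2
    have ht0 : 0 ≤ s ⬝ᵥ ((XEᵀ * XE) *ᵥ s) := by
      rw [hAquad, dot_self_eq_sq]; positivity
    have hts : (1 - R^2) * (s ⬝ᵥ ((XEᵀ * XE) *ᵥ s)) ≤ S⁻¹ j j := by
      have h0 := hSlow s; rw [q1] at h0; exact h0
    have hCS_A : (S⁻¹ j j)^2 ≤ ((XEᵀ * XE)⁻¹) j j * (s ⬝ᵥ ((XEᵀ * XE) *ᵥ s)) := by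
      have h0 := dot_sq_le (XE *ᵥ aj) (XE *ᵥ s)
      rw [← hAquad aj s, ← hAquad aj aj, ← hAquad s s, q3, q2] at h0
      exact h0
    have hdAS : ((XEᵀ * XE)⁻¹) j j ≤ S⁻¹ j j := by
      have h0 := dot_sq_le (XE *ᵥ s - P *ᵥ (XE *ᵥ s)) (XE *ᵥ aj - P *ᵥ (XE *ᵥ aj))
      rw [hSz s aj, hSz s s, hSz aj aj, q4, q1] at h0
      exact calc_dAS h0 q5 hdA hdS
    have hlow : (1 - R^2) * (S⁻¹ j j) ≤ ((XEᵀ * XE)⁻¹) j j := by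
      exact calc_low hCS_A hts hdS hdA ht0 (by linarith)
    have hrS : (0:ℝ) < Real.sqrt (S⁻¹ j j) := Real.sqrt_pos.mpr hdS
    have hrA : (0:ℝ) < Real.sqrt (((XEᵀ * XE)⁻¹) j j) := Real.sqrt_pos.mpr hdA
    have hrS2 : Real.sqrt (S⁻¹ j j) ^ 2 = S⁻¹ j j := Real.sq_sqrt hdS.le
    have hrA2 : Real.sqrt (((XEᵀ * XE)⁻¹) j j) ^ 2 = ((XEᵀ * XE)⁻¹) j j :=
      Real.sq_sqrt hdA.le
    have hrAS : Real.sqrt (((XEᵀ * XE)⁻¹) j j) ≤ Real.sqrt (S⁻¹ j j) :=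
      Real.sqrt_le_sqrt hdAS
    have hratio : (1 - R^2) * Real.sqrt (S⁻¹ j j) ≤ Real.sqrt (((XEᵀ * XE)⁻¹) j j) := by
      exact calc_ratio hrS2 hrA2 hrS hrA hrAS hlow
    -- component identities
    have hαd : (S⁻¹ *ᵥ (XEᵀ *ᵥ z)) j = (XE *ᵥ s) ⬝ᵥ z := by
      rw [mulVec_apply_eq hSinvsym, ← hedef, ← hsdef, dot_tmulvec]
    have hβd : ((XEᵀ * XE)⁻¹ *ᵥ (XEᵀ *ᵥ z)) j = (XE *ᵥ aj) ⬝ᵥ z := by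
      rw [mulVec_apply_eq hAinvsym, ← hedef, ← hajdef, dot_tmulvec]
    -- norms
    have hnu2 : nrm (XE *ᵥ aj) = Real.sqrt (((XEᵀ * XE)⁻¹) j j) := by
      rw [← Real.sqrt_sq (nrm_nonneg _), ← dot_self_eq_sq, ← hAquad aj aj, q2]
    have hndiff : nrm (XE *ᵥ s - XE *ᵥ aj) ^ 2
        = s ⬝ᵥ ((XEᵀ * XE) *ᵥ s) - 2*(S⁻¹ j j) + ((XEᵀ * XE)⁻¹) j j := by
      rw [← dot_self_eq_sq]
      simp only [dotProduct_sub, sub_dotProduct]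
      rw [← hAquad s s, ← hAquad s aj, ← hAquad aj s, ← hAquad aj aj, q3', q3, q2]
      ring
    have hu0 : (0:ℝ) ≤ s ⬝ᵥ ((XEᵀ * XE) *ᵥ s) - 2*(S⁻¹ j j) + ((XEᵀ * XE)⁻¹) j j := by
      rw [← hndiff]; positivity
    have hD2 : Real.sqrt c * nrm (XE *ᵥ s - XE *ᵥ aj) ≤ R * Real.sqrt (S⁻¹ j j) := by
      refine le_of_sq_le_sq' (mul_nonneg hrc.le (nrm_nonneg _))
        (mul_nonneg hR0 (Real.sqrt_nonneg _)) ?_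
      rw [mul_pow, mul_pow, hrc2, hndiff, hrS2]
      exact calc_D2 hts hdAS hcR hc hu0 hdS.le
    have habs1 : |(XE *ᵥ s) ⬝ᵥ z - (XE *ᵥ aj) ⬝ᵥ z| ≤ nrm (XE *ᵥ s - XE *ᵥ aj) * nrm z := by
      rw [← sub_dotProduct]; exact abs_dot_le _ _
    have habs2 : |(XE *ᵥ aj) ⬝ᵥ z| ≤ Real.sqrt (((XEᵀ * XE)⁻¹) j j) * nrm z := by
      rw [← hnu2]; exact abs_dot_le _ _
    rw [hαd, hβd]
    have hD2' : Real.sqrt c * nrm (XE *ᵥ s - XE *ᵥ aj) ≤ R * Real.sqrt (S⁻¹ j j) := hD2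
    exact final_calc hσ hrc hR0 hR1 (nrm_nonneg z) hrS hrA hrAS hratio habs1 hD2' habs2
  have extra : ∀ j : Fin a,
      |σ⁻¹ * ((XEᵀ * XE)⁻¹ *ᵥ (XEᵀ *ᵥ z)) j / Real.sqrt (((XEᵀ * XE)⁻¹) j j) -
        σ⁻¹ * ((XEᵀ * XE)⁻¹ *ᵥ (XEᵀ *ᵥ Y)) j / Real.sqrt (((XEᵀ * XE)⁻¹) j j)| ≤
        σ⁻¹ * nrm (P *ᵥ Y) := by
    intro j
    set e : Fin a → ℝ := Pi.single j 1 with hedef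
    have he0 : e ≠ 0 := by
      intro h0
      have h1 := congrFun h0 j
      rw [hedef] at h1; simp at h1
    set aj : Fin a → ℝ := (XEᵀ * XE)⁻¹ *ᵥ e with hajdef
    have hajj : aj j = ((XEᵀ * XE)⁻¹) j j := by rw [hajdef, hedef]; simp
    have hdA : 0 < ((XEᵀ * XE)⁻¹) j j := by
      have h0 := hAinvP.dotProduct_mulVec_pos he0
      rw [star_trivial, ← hajdef] at h0
      rwa [hedef, single_dotProduct, one_mul, hajj] at h0
    have hrA : (0:ℝ) < Real.sqrt (((XEᵀ * XE)⁻¹) j j) := Real.sqrt_pos.mpr hdA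
    have hAe : (XEᵀ * XE) *ᵥ aj = e := by
      rw [hajdef, Matrix.mulVec_mulVec, Matrix.mul_nonsing_inv _ hAd, Matrix.one_mulVec]
    have q2 : aj ⬝ᵥ ((XEᵀ * XE) *ᵥ aj) = ((XEᵀ * XE)⁻¹) j j := by
      rw [hAe, hedef, dotProduct_single, mul_one, hajj]
    have hnu2 : nrm (XE *ᵥ aj) = Real.sqrt (((XEᵀ * XE)⁻¹) j j) := by
      rw [← Real.sqrt_sq (nrm_nonneg _), ← dot_self_eq_sq, ← hAquad aj aj, q2]
    have hβd : ((XEᵀ * XE)⁻¹ *ᵥ (XEᵀ *ᵥ z)) j = (XE *ᵥ aj) ⬝ᵥ z := by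
      rw [mulVec_apply_eq hAinvsym, ← hedef, ← hajdef, dot_tmulvec]
    have hβ'd : ((XEᵀ * XE)⁻¹ *ᵥ (XEᵀ *ᵥ Y)) j = (XE *ᵥ aj) ⬝ᵥ Y := by
      rw [mulVec_apply_eq hAinvsym, ← hedef, ← hajdef, dot_tmulvec]
    have hsub : (XE *ᵥ aj) ⬝ᵥ z - (XE *ᵥ aj) ⬝ᵥ Y = (XE *ᵥ aj) ⬝ᵥ (-(P *ᵥ Y)) := by
      rw [← dotProduct_sub, hzY, sub_sub_cancel_left]
    have habs : |(XE *ᵥ aj) ⬝ᵥ z - (XE *ᵥ aj) ⬝ᵥ Y|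
        ≤ Real.sqrt (((XEᵀ * XE)⁻¹) j j) * nrm (P *ᵥ Y) := by
      rw [hsub, ← hnu2, ← nrm_neg (P *ᵥ Y)]
      exact abs_dot_le _ _
    rw [hβd, hβ'd]
    have heq : σ⁻¹ * ((XE *ᵥ aj) ⬝ᵥ z) / Real.sqrt (((XEᵀ * XE)⁻¹) j j) -
        σ⁻¹ * ((XE *ᵥ aj) ⬝ᵥ Y) / Real.sqrt (((XEᵀ * XE)⁻¹) j j)
        = σ⁻¹ * ((XE *ᵥ aj) ⬝ᵥ z - (XE *ᵥ aj) ⬝ᵥ Y) / Real.sqrt (((XEᵀ * XE)⁻¹) j j) := by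
      ring
    rw [heq, abs_div, abs_of_pos hrA, abs_mul, abs_of_pos hσi, div_le_iff₀ hrA]
    calc σ⁻¹ * |(XE *ᵥ aj) ⬝ᵥ z - (XE *ᵥ aj) ⬝ᵥ Y|
        ≤ σ⁻¹ * (Real.sqrt (((XEᵀ * XE)⁻¹) j j) * nrm (P *ᵥ Y)) :=
          mul_le_mul_of_nonneg_left habs hσi.le
      _ = σ⁻¹ * nrm (P *ᵥ Y) * Real.sqrt (((XEᵀ * XE)⁻¹) j j) := by ring
  have hnY : 0 < nrm Y := by
    rcases (nrm_nonneg Y).lt_or_eq with h | h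
    · exact h
    · exfalso
      have h0 := dot_self_pos hY
      rw [dot_self_eq_sq, ← h] at h0
      simp at h0
  have hzleY : nrm z ≤ nrm Y := by
    refine le_of_sq_le_sq' (nrm_nonneg _) (nrm_nonneg _) ?_
    rw [← dot_self_eq_sq, ← dot_self_eq_sq, hzY]
    simp only [dotProduct_sub, sub_dotProduct]
    have h1 : Y ⬝ᵥ (P *ᵥ Y) = (P *ᵥ Y) ⬝ᵥ (P *ᵥ Y) := dot_proj hPsym hPP Y Y
    have h2 : (P *ᵥ Y) ⬝ᵥ Y = (P *ᵥ Y) ⬝ᵥ (P *ᵥ Y) := by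
      rw [dotProduct_comm]; exact h1
    have h3 : 0 ≤ (P *ᵥ Y) ⬝ᵥ (P *ᵥ Y) := by rw [dot_self_eq_sq]; positivity
    linarith only [h1, h2, h3]
  have hCnn : (0:ℝ) ≤ (Real.sqrt c)⁻¹ := inv_nonneg.mpr hrc.le
  constructor
  · intro j
    rw [hθ j, hdiag j]
    have h1 := main2 j
    have h2 := extra j
    have h3 := abs_sub_le (σ⁻¹ * (S⁻¹ *ᵥ (XEᵀ *ᵥ z)) j / Real.sqrt (S⁻¹ j j))
      (σ⁻¹ * ((XEᵀ * XE)⁻¹ *ᵥ (XEᵀ *ᵥ z)) j / Real.sqrt (((XEᵀ * XE)⁻¹) j j))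
      (σ⁻¹ * ((XEᵀ * XE)⁻¹ *ᵥ (XEᵀ *ᵥ Y)) j / Real.sqrt (((XEᵀ * XE)⁻¹) j j))
    have hexp : (1 + (Real.sqrt c)⁻¹) * σ⁻¹ * nrm Y * (R + nrm (P *ᵥ Y) / nrm Y)
        = (1 + (Real.sqrt c)⁻¹) * σ⁻¹ * nrm Y * R
          + (1 + (Real.sqrt c)⁻¹) * σ⁻¹ * nrm (P *ᵥ Y) := by
      field_simp
    have t1 : (1 + (Real.sqrt c)⁻¹) * σ⁻¹ * nrm z * R
        ≤ (1 + (Real.sqrt c)⁻¹) * σ⁻¹ * nrm Y * R :=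
      mul_le_mul_of_nonneg_right
        (mul_le_mul_of_nonneg_left hzleY (by positivity)) hR0
    have t2 : σ⁻¹ * nrm (P *ᵥ Y) ≤ (1 + (Real.sqrt c)⁻¹) * σ⁻¹ * nrm (P *ᵥ Y) := by
      have h9 : 0 ≤ (Real.sqrt c)⁻¹ * (σ⁻¹ * nrm (P *ᵥ Y)) :=
        mul_nonneg hCnn (mul_nonneg hσi.le (nrm_nonneg _))
      linarith only [h9]
    rw [hexp]
    linarith only [h1, h2, h3, t1, t2]
  · intro j
    rw [hθ j, hdiag j]
    exact main2 j
/-- Approximation of the joint-regression Wald statistics by marginal ones, with a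
constant depending only on c. -/
theorem stmt_11 (c : ℝ) (hc : 0 < c) :
    ∃ C : ℝ, 0 < C ∧
      ∀ (n a b : ℕ) (XE : Matrix (Fin n) (Fin a) ℝ) (XF : Matrix (Fin n) (Fin b) ℝ)
        (Y : Fin n → ℝ) (σ : ℝ), 0 < σ → Y ≠ 0 →
        (∀ j, ∑ i, XE i j = 0) → (∀ j, ∑ i, XF i j = 0) → (∑ i, Y i = 0) →
        (Matrix.fromCols XE XF).rank = a + b →
        specNorm (proj XE * proj XF) ≤ 1 - c →
        (let XK := Matrix.fromCols XE XF
         let θK := (XKᵀ * XK)⁻¹ *ᵥ (XKᵀ *ᵥ Y)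
         let TEF := fun j : Fin a =>
           σ⁻¹ * θK (Sum.inl j) / Real.sqrt (((XKᵀ * XK)⁻¹) (Sum.inl j) (Sum.inl j))
         let θE := (XEᵀ * XE)⁻¹ *ᵥ (XEᵀ *ᵥ Y)
         let TE := fun j : Fin a => σ⁻¹ * θE j / Real.sqrt (((XEᵀ * XE)⁻¹) j j)
         let Ytil := (1 - proj XF) *ᵥ Y
         let θEt := (XEᵀ * XE)⁻¹ *ᵥ (XEᵀ *ᵥ Ytil)
         let TEt := fun j : Fin a => σ⁻¹ * θEt j / Real.sqrt (((XEᵀ * XE)⁻¹) j j)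
         (∀ j, |TEF j - TE j| ≤ C * σ⁻¹ * nrm Y *
             (specNorm (proj XE * proj XF) + nrm (proj XF *ᵥ Y) / nrm Y)) ∧
         (∀ j, |TEF j - TEt j| ≤ C * σ⁻¹ * nrm Ytil * specNorm (proj XE * proj XF))) := by
  
  refine ⟨1 + (Real.sqrt c)⁻¹, by positivity, ?_⟩
  intro n a b XE XF Y σ hσ hY _ _ _ hrank hspec
  exact key c hc XE XF Y σ hσ hY hrank hspec
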